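/- For every integer g ≥ 1, ζ(6g) · C(4g,g) · (16/3)^g · (1 − 2/(6g−1)) ≤ V1(g+1) ≤ ζ(6g) · C(4g,g) · (16/3)^g. -/

import Mathlib

open Nat Real Filter


/-- The piecewise quantity `D(g,k)` from the recurrence for normalized
2-correlators: `D(g,k)` depends on the residue of `k` mod 3, with `k = 3j-1`,
`k = 3j`, or `k = 3j+1` respectively. -/
noncomputable def Dterm (g k : ℕ) : ℚ :=
  if k % 3 = 2 then
    -- k = 3j - 1, with j = (k+1)/3
    ((6 * ((k + 1) / 3) - 1)‼ : ℚ) / (((k + 1) / 3)! : ℚ) *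
      (((g - 1)! : ℚ) / ((g - (k + 1) / 3)! : ℚ)) * ((g : ℚ) - 2 * ((k + 1) / 3))
  else if k % 3 = 0 then
    -- k = 3j, with j = k/3
    -2 * ((6 * (k / 3) + 1)‼ : ℚ) / ((k / 3)! : ℚ) *
      (((g - 1)! : ℚ) / ((g - 1 - k / 3)! : ℚ))
  else
    -- k = 3j + 1, with j = (k-1)/3
    2 * ((6 * ((k - 1) / 3) + 3)‼ : ℚ) / (((k - 1) / 3)! : ℚ) *
      (((g - 1)! : ℚ) / ((g - 1 - (k - 1) / 3)! : ℚ))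

/-- `a : ℕ → ℚ` is the sequence `(a_{g,k})_{0 ≤ k ≤ 3g-1}` of normalized
2-correlators: `a 0 = 1`, the recurrence
`a (k+1) - a k = ((6g-3-2k)‼/(6g-1)‼) · D(g,k)` for `0 ≤ k ≤ ⌊(3g-1)/2⌋ - 1`,
and the symmetry `a k = a (3g-1-k)` for `0 ≤ k ≤ 3g-1`. -/
def IsCorr (g : ℕ) (a : ℕ → ℚ) : Prop :=
  a 0 = 1 ∧
  (∀ k : ℕ, k + 1 ≤ (3 * g - 1) / 2 →
    a (k + 1) - a k = ((6 * g - 3 - 2 * k)‼ : ℚ) / ((6 * g - 1)‼ : ℚ) * Dterm g k) ∧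
  (∀ k : ℕ, k ≤ 3 * g - 1 → a k = a (3 * g - 1 - k))

/-- `R(g,j) = C(3g,3j)·C(g,j)/C(6g,6j)`. -/
noncomputable def R (g j : ℕ) : ℚ :=
  (((3 * g).choose (3 * j) : ℚ) * (g.choose j : ℚ)) / ((6 * g).choose (6 * j) : ℚ)

/-- Riemann zeta value `ζ(s) = Σ_{n ≥ 1} n⁻ˢ` as a real number. -/
noncomputable def zetaR (s : ℕ) : ℝ := ∑' n : ℕ, (1 : ℝ) / (n + 1) ^ s

/-- `V1(g) = Vol(Γ₁(g))`, the contribution of one-cylinder square-tiled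
surfaces with nonseparating waist curve to the Masur–Veech volume `Vol 𝒬_g`,
expressed via the sequence `a` of normalized 2-correlators. -/
noncomputable def V1 (a : ℕ → ℕ → ℚ) (g : ℕ) : ℝ :=
  zetaR (6 * g - 6) * ((4 * g - 4).choose (g - 1) : ℝ) *
    (2 / (3 ^ (g - 1) * 2 ^ (2 * g - 2))) *
    ∑ k ∈ Finset.range (3 * g - 3), ((6 * g - 6).choose (2 * k + 1) : ℝ) * (a (g - 1) k : ℝ)

/-- `S(g) = Σ_{g₁=1}^{g-1} C(g,g₁)·C(3g-4,3g₁-2)`. -/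
def S (g : ℕ) : ℕ :=
  ∑ g₁ ∈ Finset.Icc 1 (g - 1), g.choose g₁ * (3 * g - 4).choose (3 * g₁ - 2)

/-- `W(g) = 2·ζ(6g-6)·C(4g-4,g)·12⁻ᵍ·S(g)`, the total contribution of
one-cylinder square-tiled surfaces with separating waist curve. -/
noncomputable def W (g : ℕ) : ℝ :=
  2 * zetaR (6 * g - 6) * ((4 * g - 4).choose g : ℝ) * (12 : ℝ)⁻¹ ^ g * (S g : ℝ)


/-- positive common factor -/
noncomputable def Cc (g j : ℕ) : ℚ :=
  ((6 * j + 1)‼ : ℚ) * ((g - 1)! : ℚ) / ((j ! : ℚ) * (((g - 1 - j))! : ℚ) * ((6 * g - 1)‼ : ℚ))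

lemma Cc_pos (g j : ℕ) : 0 < Cc g j := by
  unfold Cc
  positivity

lemma dfq_pos (n : ℕ) : (0:ℚ) < (n‼ : ℚ) := by exact_mod_cast Nat.doubleFactorial_pos n

lemma castsub (A B : ℕ) (h : B ≤ A) : ((A - B : ℕ) : ℚ) = (A:ℚ) - (B:ℚ) := by
  push_cast [Nat.cast_sub h]; ring

section dvals
variable {g : ℕ} {a : ℕ → ℚ}
  (hrec : ∀ k : ℕ, k + 1 ≤ (3 * g - 1) / 2 →
    a (k + 1) - a k = ((6 * g - 3 - 2 * k)‼ : ℚ) / ((6 * g - 1)‼ : ℚ) * Dterm g k)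

include hrec

lemma d0 (j : ℕ) (hj : 3 * j + 1 ≤ (3 * g - 1) / 2) :
    a (3 * j + 1) - a (3 * j) = -2 * Cc g j * ((6 * g - 3 - 6 * j)‼ : ℚ) := by
  have h := hrec (3 * j) hj
  rw [show 6 * g - 3 - 2 * (3 * j) = 6 * g - 3 - 6 * j by omega] at h
  unfold Dterm at h
  rw [if_neg (by omega), if_pos (by omega)] at h
  rw [show 3 * j / 3 = j by omega] at h
  rw [h]
  unfold Cc
  have h1 : ((j)! : ℚ) ≠ 0 := by positivity
  have h2 : (((g - 1 - j))! : ℚ) ≠ 0 := by positivity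
  have h3 : (((6 * g - 1))‼ : ℚ) ≠ 0 := by positivity
  field_simp

lemma d1 (j : ℕ) (hj : 3 * j + 2 ≤ (3 * g - 1) / 2) :
    a (3 * j + 2) - a (3 * j + 1) =
      2 * Cc g j * (6 * (j:ℚ) + 3) * ((6 * g - 5 - 6 * j)‼ : ℚ) := by
  have h := hrec (3 * j + 1) (by omega)
  rw [show 6 * g - 3 - 2 * (3 * j + 1) = 6 * g - 5 - 6 * j by omega] at h
  unfold Dterm at h
  rw [if_neg (by omega), if_neg (by omega)] at h
  rw [show (3 * j + 1 - 1) / 3 = j by omega] at h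
  rw [show 6 * j + 3 = 6 * j + 1 + 2 by omega, Nat.doubleFactorial_add_two] at h
  rw [h]
  unfold Cc
  have h1 : ((j)! : ℚ) ≠ 0 := by positivity
  have h2 : (((g - 1 - j))! : ℚ) ≠ 0 := by positivity
  have h3 : (((6 * g - 1))‼ : ℚ) ≠ 0 := by positivity
  push_cast
  field_simp
  ring

lemma d2 (j : ℕ) (hj : 3 * j + 3 ≤ (3 * g - 1) / 2) :
    a (3 * j + 3) - a (3 * j + 2) =
      Cc g j * (6 * (j:ℚ) + 3) * (6 * (j:ℚ) + 5) * ((g:ℚ) - 2 * j - 2) / ((j:ℚ) + 1) *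
        ((6 * g - 7 - 6 * j)‼ : ℚ) := by
  have h := hrec (3 * j + 2) (by omega)
  rw [show 6 * g - 3 - 2 * (3 * j + 2) = 6 * g - 7 - 6 * j by omega] at h
  unfold Dterm at h
  rw [if_pos (by omega)] at h
  rw [show (3 * j + 2 + 1) / 3 = j + 1 by omega] at h
  rw [show 6 * (j + 1) - 1 = 6 * j + 3 + 2 by omega, Nat.doubleFactorial_add_two,
    show 6 * j + 3 = 6 * j + 1 + 2 by omega, Nat.doubleFactorial_add_two,
    show g - (j + 1) = g - 1 - j by omega, Nat.factorial_succ] at h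
  rw [h]
  unfold Cc
  have h1 : ((j)! : ℚ) ≠ 0 := by positivity
  have h2 : (((g - 1 - j))! : ℚ) ≠ 0 := by positivity
  have h3 : (((6 * g - 1))‼ : ℚ) ≠ 0 := by positivity
  have h4 : ((j:ℚ) + 1) ≠ 0 := by positivity
  push_cast
  field_simp
  ring

lemma d3 (j : ℕ) (hj : 3 * j + 4 ≤ (3 * g - 1) / 2) :
    a (3 * j + 4) - a (3 * j + 3) =
      -2 * Cc g j * (6 * (j:ℚ) + 3) * (6 * (j:ℚ) + 5) * (6 * (j:ℚ) + 7) *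
        ((g:ℚ) - 1 - j) / ((j:ℚ) + 1) * ((6 * g - 9 - 6 * j)‼ : ℚ) := by
  have hg : 2 * j + 3 ≤ g := by omega
  have h := hrec (3 * j + 3) (by omega)
  rw [show 6 * g - 3 - 2 * (3 * j + 3) = 6 * g - 9 - 6 * j by omega] at h
  unfold Dterm at h
  rw [if_neg (by omega), if_pos (by omega)] at h
  rw [show (3 * j + 3) / 3 = j + 1 by omega] at h
  rw [show 6 * (j + 1) + 1 = 6 * j + 5 + 2 by omega, Nat.doubleFactorial_add_two,
    show 6 * j + 5 = 6 * j + 3 + 2 by omega, Nat.doubleFactorial_add_two,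
    show 6 * j + 3 = 6 * j + 1 + 2 by omega, Nat.doubleFactorial_add_two,
    Nat.factorial_succ] at h
  have hfac : ((g - 1 - j)! : ℚ) = ((g - 1 - j : ℕ) : ℚ) * ((g - 2 - j)! : ℚ) := by
    rw [show g - 1 - j = (g - 2 - j) + 1 by omega, Nat.factorial_succ]
    push_cast
    ring
  have hcast : ((g - 1 - j : ℕ) : ℚ) = (g:ℚ) - 1 - j := by
    rw [show g - 1 - j = g - (1 + j) by omega]
    push_cast [Nat.cast_sub (show 1 + j ≤ g by omega)]
    ring
  rw [show g - 1 - (j + 1) = g - 2 - j by omega] at h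
  rw [h]
  unfold Cc
  have h1 : ((j)! : ℚ) ≠ 0 := by positivity
  have h2 : (((g - 2 - j))! : ℚ) ≠ 0 := by positivity
  have h3 : (((6 * g - 1))‼ : ℚ) ≠ 0 := by positivity
  have h4 : ((j:ℚ) + 1) ≠ 0 := by positivity
  have h5 : (0:ℚ) < (g:ℚ) - 1 - j := by
    rw [← hcast]
    exact_mod_cast Nat.pos_of_ne_zero (by omega)
  rw [hfac, hcast]
  push_cast
  field_simp
  ring

/-- `a (3j+1) ≤ a (3j)` -/
lemma step_down (j : ℕ) (hj : 3 * j + 1 ≤ (3 * g - 1) / 2) :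
    a (3 * j + 1) ≤ a (3 * j) := by
  have h := d0 hrec j hj
  have h1 := mul_pos (Cc_pos g j) (dfq_pos (6 * g - 3 - 6 * j))
  linarith

/-- `a (3j+1) ≤ a (3j+2)` -/
lemma step_up1 (j : ℕ) (hj : 3 * j + 2 ≤ (3 * g - 1) / 2) :
    a (3 * j + 1) ≤ a (3 * j + 2) := by
  have h := d1 hrec j hj
  have h1 : (0:ℚ) ≤ 2 * Cc g j * (6 * (j:ℚ) + 3) * ((6 * g - 5 - 6 * j)‼ : ℚ) := by
    have := Cc_pos g j
    have := dfq_pos (6 * g - 5 - 6 * j)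
    have : (0:ℚ) ≤ (j:ℚ) := Nat.cast_nonneg j
    positivity
  linarith

/-- `a (3j+2) ≤ a (3j+3)` -/
lemma step_up2 (j : ℕ) (hj : 3 * j + 3 ≤ (3 * g - 1) / 2) :
    a (3 * j + 2) ≤ a (3 * j + 3) := by
  have h := d2 hrec j hj
  have hg : 2 * j + 3 ≤ g := by omega
  have hgq : 2 * (j:ℚ) + 3 ≤ (g:ℚ) := by exact_mod_cast hg
  have h1 : (0:ℚ) ≤ Cc g j * (6 * (j:ℚ) + 3) * (6 * (j:ℚ) + 5) * ((g:ℚ) - 2 * j - 2) /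
      ((j:ℚ) + 1) * ((6 * g - 7 - 6 * j)‼ : ℚ) := by
    have hc := Cc_pos g j
    have hd := dfq_pos (6 * g - 7 - 6 * j)
    have hj0 : (0:ℚ) ≤ (j:ℚ) := Nat.cast_nonneg j
    have : (0:ℚ) ≤ (g:ℚ) - 2 * j - 2 := by linarith
    positivity
  linarith

/-- `a (3j+2) ≤ a (3j)` -/
lemma step_U1 (j : ℕ) (hj : 3 * j + 2 ≤ (3 * g - 1) / 2) :
    a (3 * j + 2) ≤ a (3 * j) := by
  have hg : 2 * j + 2 ≤ g := by omega
  have h0 := d0 hrec j (by omega)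
  have h1 := d1 hrec j hj
  have c0 : ((6 * g - 5 - 6 * j : ℕ) : ℚ) = 6 * (g:ℚ) - 5 - 6 * (j:ℚ) := by
    rw [show 6 * g - 5 - 6 * j = 6 * g - (5 + 6 * j) by omega,
      castsub (6 * g) (5 + 6 * j) (by omega)]
    push_cast; ring
  have e : ((6 * g - 3 - 6 * j)‼ : ℚ) =
      (6 * (g:ℚ) - 3 - 6 * (j:ℚ)) * ((6 * g - 5 - 6 * j)‼ : ℚ) := by
    conv_lhs => rw [show 6 * g - 3 - 6 * j = (6 * g - 5 - 6 * j) + 2 by omega,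
      Nat.doubleFactorial_add_two]
    push_cast
    rw [c0]
    ring
  rw [e] at h0
  have key : a (3 * j + 2) - a (3 * j) = 2 * Cc g j * ((6 * g - 5 - 6 * j)‼ : ℚ) *
      ((6 * (j:ℚ) + 3) - (6 * (g:ℚ) - 3 - 6 * (j:ℚ))) := by
    linear_combination h0 + h1
  have hgq : 2 * (j:ℚ) + 2 ≤ (g:ℚ) := by exact_mod_cast hg
  have hp : (0:ℚ) ≤ 2 * Cc g j * ((6 * g - 5 - 6 * j)‼ : ℚ) := by
    have := Cc_pos g j
    have := dfq_pos (6 * g - 5 - 6 * j)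
    positivity
  nlinarith [mul_nonneg hp (show (0:ℚ) ≤ (6 * (g:ℚ) - 3 - 6 * (j:ℚ)) - (6 * (j:ℚ) + 3) by linarith)]

/-- `a (3j+3) ≤ a (3j)` -/
lemma step_U2 (j : ℕ) (hj : 3 * j + 3 ≤ (3 * g - 1) / 2) :
    a (3 * j + 3) ≤ a (3 * j) := by
  have hg : 2 * j + 3 ≤ g := by omega
  have h0 := d0 hrec j (by omega)
  have h1 := d1 hrec j (by omega)
  have h2 := d2 hrec j hj
  have c1 : ((6 * g - 7 - 6 * j : ℕ) : ℚ) = 6 * (g:ℚ) - 7 - 6 * (j:ℚ) := by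
    rw [show 6 * g - 7 - 6 * j = 6 * g - (7 + 6 * j) by omega,
      castsub (6 * g) (7 + 6 * j) (by omega)]
    push_cast; ring
  have e1 : ((6 * g - 3 - 6 * j)‼ : ℚ) = (6 * (g:ℚ) - 3 - 6 * (j:ℚ)) *
      ((6 * (g:ℚ) - 5 - 6 * (j:ℚ)) * ((6 * g - 7 - 6 * j)‼ : ℚ)) := by
    conv_lhs => rw [show 6 * g - 3 - 6 * j = (6 * g - 7 - 6 * j) + 2 + 2 by omega,
      Nat.doubleFactorial_add_two, Nat.doubleFactorial_add_two]
    push_cast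
    rw [c1]
    ring
  have e2 : ((6 * g - 5 - 6 * j)‼ : ℚ) =
      (6 * (g:ℚ) - 5 - 6 * (j:ℚ)) * ((6 * g - 7 - 6 * j)‼ : ℚ) := by
    conv_lhs => rw [show 6 * g - 5 - 6 * j = (6 * g - 7 - 6 * j) + 2 by omega,
      Nat.doubleFactorial_add_two]
    push_cast
    rw [c1]
    ring
  rw [e1] at h0
  rw [e2] at h1
  have key : a (3 * j + 3) - a (3 * j) = Cc g j * ((6 * g - 7 - 6 * j)‼ : ℚ) *
      (-2 * (6 * (g:ℚ) - 3 - 6 * (j:ℚ)) * (6 * (g:ℚ) - 5 - 6 * (j:ℚ))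
        + 2 * (6 * (j:ℚ) + 3) * (6 * (g:ℚ) - 5 - 6 * (j:ℚ))
        + (6 * (j:ℚ) + 3) * (6 * (j:ℚ) + 5) * ((g:ℚ) - 2 * j - 2) / ((j:ℚ) + 1)) := by
    linear_combination h0 + h1 + h2
  have hjq : (0:ℚ) ≤ (j:ℚ) := Nat.cast_nonneg j
  have hgq : 2 * (j:ℚ) + 3 ≤ (g:ℚ) := by exact_mod_cast hg
  have hbr : (-2 * (6 * (g:ℚ) - 3 - 6 * (j:ℚ)) * (6 * (g:ℚ) - 5 - 6 * (j:ℚ))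
        + 2 * (6 * (j:ℚ) + 3) * (6 * (g:ℚ) - 5 - 6 * (j:ℚ))
        + (6 * (j:ℚ) + 3) * (6 * (j:ℚ) + 5) * ((g:ℚ) - 2 * j - 2) / ((j:ℚ) + 1)) ≤ 0 := by
    have hne : ((j:ℚ) + 1) ≠ 0 := by positivity
    have hform : (-2 * (6 * (g:ℚ) - 3 - 6 * (j:ℚ)) * (6 * (g:ℚ) - 5 - 6 * (j:ℚ))
        + 2 * (6 * (j:ℚ) + 3) * (6 * (g:ℚ) - 5 - 6 * (j:ℚ))
        + (6 * (j:ℚ) + 3) * (6 * (j:ℚ) + 5) * ((g:ℚ) - 2 * j - 2) / ((j:ℚ) + 1))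
        = (((j:ℚ) + 1) * (-2 * (6 * (g:ℚ) - 3 - 6 * (j:ℚ)) * (6 * (g:ℚ) - 5 - 6 * (j:ℚ))
            + 2 * (6 * (j:ℚ) + 3) * (6 * (g:ℚ) - 5 - 6 * (j:ℚ)))
          + (6 * (j:ℚ) + 3) * (6 * (j:ℚ) + 5) * ((g:ℚ) - 2 * j - 2)) / ((j:ℚ) + 1) := by
      field_simp
    rw [hform]
    apply div_nonpos_of_nonpos_of_nonneg _ (by positivity)
    nlinarith [mul_nonneg (show (0:ℚ) ≤ (g:ℚ) - 2 * j - 3 by linarith) hjq,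
      mul_nonneg (show (0:ℚ) ≤ (g:ℚ) - 2 * j - 3 by linarith)
        (show (0:ℚ) ≤ (g:ℚ) - 2 * j - 3 by linarith),
      mul_nonneg hjq hjq,
      mul_nonneg (mul_nonneg (show (0:ℚ) ≤ (g:ℚ) - 2 * j - 3 by linarith) hjq) hjq,
      mul_nonneg (mul_nonneg (show (0:ℚ) ≤ (g:ℚ) - 2 * j - 3 by linarith)
        (show (0:ℚ) ≤ (g:ℚ) - 2 * j - 3 by linarith)) hjq]
  have hp : (0:ℚ) ≤ Cc g j * ((6 * g - 7 - 6 * j)‼ : ℚ) := by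
    have := Cc_pos g j
    have := dfq_pos (6 * g - 7 - 6 * j)
    positivity
  nlinarith [mul_nonneg hp (neg_nonneg.mpr hbr)]

set_option maxHeartbeats 1000000 in
/-- `a (3j+1) ≤ a (3j+4)` -/
lemma step_L2 (j : ℕ) (hj : 3 * j + 4 ≤ (3 * g - 1) / 2) :
    a (3 * j + 1) ≤ a (3 * j + 4) := by
  have hg : 2 * j + 3 ≤ g := by omega
  have h1 := d1 hrec j (by omega)
  have h2 := d2 hrec j (by omega)
  have h3 := d3 hrec j hj
  have c1 : ((6 * g - 9 - 6 * j : ℕ) : ℚ) = 6 * (g:ℚ) - 9 - 6 * (j:ℚ) := by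
    rw [show 6 * g - 9 - 6 * j = 6 * g - (9 + 6 * j) by omega,
      castsub (6 * g) (9 + 6 * j) (by omega)]
    push_cast; ring
  have f1 : ((6 * g - 5 - 6 * j)‼ : ℚ) = (6 * (g:ℚ) - 5 - 6 * (j:ℚ)) *
      ((6 * (g:ℚ) - 7 - 6 * (j:ℚ)) * ((6 * g - 9 - 6 * j)‼ : ℚ)) := by
    conv_lhs => rw [show 6 * g - 5 - 6 * j = (6 * g - 9 - 6 * j) + 2 + 2 by omega,
      Nat.doubleFactorial_add_two, Nat.doubleFactorial_add_two]
    push_cast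
    rw [c1]
    ring
  have f2 : ((6 * g - 7 - 6 * j)‼ : ℚ) =
      (6 * (g:ℚ) - 7 - 6 * (j:ℚ)) * ((6 * g - 9 - 6 * j)‼ : ℚ) := by
    conv_lhs => rw [show 6 * g - 7 - 6 * j = (6 * g - 9 - 6 * j) + 2 by omega,
      Nat.doubleFactorial_add_two]
    push_cast
    rw [c1]
    ring
  rw [f1] at h1
  rw [f2] at h2
  have key : a (3 * j + 4) - a (3 * j + 1) = Cc g j * ((6 * g - 9 - 6 * j)‼ : ℚ) *
      (2 * (6 * (j:ℚ) + 3) * (6 * (g:ℚ) - 5 - 6 * (j:ℚ)) * (6 * (g:ℚ) - 7 - 6 * (j:ℚ))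
        + (6 * (j:ℚ) + 3) * (6 * (j:ℚ) + 5) * ((g:ℚ) - 2 * j - 2) *
            (6 * (g:ℚ) - 7 - 6 * (j:ℚ)) / ((j:ℚ) + 1)
        - 2 * (6 * (j:ℚ) + 3) * (6 * (j:ℚ) + 5) * (6 * (j:ℚ) + 7) *
            ((g:ℚ) - 1 - (j:ℚ)) / ((j:ℚ) + 1)) := by
    linear_combination h1 + h2 + h3
  have hjq : (0:ℚ) ≤ (j:ℚ) := Nat.cast_nonneg j
  have hgq : 2 * (j:ℚ) + 3 ≤ (g:ℚ) := by exact_mod_cast hg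
  have hbr : (0:ℚ) ≤
      (2 * (6 * (j:ℚ) + 3) * (6 * (g:ℚ) - 5 - 6 * (j:ℚ)) * (6 * (g:ℚ) - 7 - 6 * (j:ℚ))
        + (6 * (j:ℚ) + 3) * (6 * (j:ℚ) + 5) * ((g:ℚ) - 2 * j - 2) *
            (6 * (g:ℚ) - 7 - 6 * (j:ℚ)) / ((j:ℚ) + 1)
        - 2 * (6 * (j:ℚ) + 3) * (6 * (j:ℚ) + 5) * (6 * (j:ℚ) + 7) *
            ((g:ℚ) - 1 - (j:ℚ)) / ((j:ℚ) + 1)) := by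
    have hne : ((j:ℚ) + 1) ≠ 0 := by positivity
    have hform : (2 * (6 * (j:ℚ) + 3) * (6 * (g:ℚ) - 5 - 6 * (j:ℚ)) * (6 * (g:ℚ) - 7 - 6 * (j:ℚ))
        + (6 * (j:ℚ) + 3) * (6 * (j:ℚ) + 5) * ((g:ℚ) - 2 * j - 2) *
            (6 * (g:ℚ) - 7 - 6 * (j:ℚ)) / ((j:ℚ) + 1)
        - 2 * (6 * (j:ℚ) + 3) * (6 * (j:ℚ) + 5) * (6 * (j:ℚ) + 7) *
            ((g:ℚ) - 1 - (j:ℚ)) / ((j:ℚ) + 1))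
        = (((j:ℚ) + 1) * (2 * (6 * (j:ℚ) + 3) * (6 * (g:ℚ) - 5 - 6 * (j:ℚ)) *
              (6 * (g:ℚ) - 7 - 6 * (j:ℚ)))
          + (6 * (j:ℚ) + 3) * (6 * (j:ℚ) + 5) * ((g:ℚ) - 2 * j - 2) *
              (6 * (g:ℚ) - 7 - 6 * (j:ℚ))
          - 2 * (6 * (j:ℚ) + 3) * (6 * (j:ℚ) + 5) * (6 * (j:ℚ) + 7) * ((g:ℚ) - 1 - (j:ℚ)))
          / ((j:ℚ) + 1) := by
      field_simp
    rw [hform]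
    apply div_nonneg _ (by positivity)
    have ht : (0:ℚ) ≤ (g:ℚ) - 2 * j - 3 := by linarith
    nlinarith [mul_nonneg ht hjq, mul_nonneg ht ht, mul_nonneg hjq hjq,
      mul_nonneg (mul_nonneg ht hjq) hjq, mul_nonneg (mul_nonneg ht ht) hjq,
      mul_nonneg (mul_nonneg ht ht) ht, mul_nonneg (mul_nonneg hjq hjq) hjq,
      mul_nonneg (mul_nonneg (mul_nonneg ht hjq) hjq) hjq,
      mul_nonneg (mul_nonneg (mul_nonneg ht ht) hjq) hjq]
  have hp : (0:ℚ) ≤ Cc g j * ((6 * g - 9 - 6 * j)‼ : ℚ) := by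
    have := Cc_pos g j
    have := dfq_pos (6 * g - 9 - 6 * j)
    positivity
  nlinarith [mul_nonneg hp hbr]

variable (ha0 : a 0 = 1)
include ha0

lemma upper3 : ∀ j : ℕ, 3 * j ≤ (3 * g - 1) / 2 → a (3 * j) ≤ 1 := by
  intro j
  induction j with
  | zero => intro _; simp [ha0]
  | succ j ih =>
    intro hj
    have h3 : 3 * j + 3 ≤ (3 * g - 1) / 2 := by omega
    have := step_U2 hrec j h3
    have := ih (by omega)
    calc a (3 * (j + 1)) = a (3 * j + 3) := by ring_nf
    _ ≤ a (3 * j) := step_U2 hrec j h3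
    _ ≤ 1 := ih (by omega)

lemma upper_all (n : ℕ) (hn : n ≤ (3 * g - 1) / 2) : a n ≤ 1 := by
  obtain ⟨j, r, hr, rfl⟩ : ∃ j r, r < 3 ∧ n = 3 * j + r := ⟨n / 3, n % 3, by omega, by omega⟩
  interval_cases r
  · have := upper3 hrec ha0 j (by omega)
    simpa using this
  · exact le_trans (step_down hrec j (by omega)) (upper3 hrec ha0 j (by omega))
  · exact le_trans (step_U1 hrec j (by omega)) (upper3 hrec ha0 j (by omega))

omit ha0

lemma lower1 : ∀ j : ℕ, 3 * j + 1 ≤ (3 * g - 1) / 2 → a 1 ≤ a (3 * j + 1) := by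
  intro j
  induction j with
  | zero => intro _; simp
  | succ j ih =>
    intro hj
    have h4 : 3 * j + 4 ≤ (3 * g - 1) / 2 := by omega
    calc a 1 ≤ a (3 * j + 1) := ih (by omega)
    _ ≤ a (3 * j + 4) := step_L2 hrec j h4
    _ = a (3 * (j + 1) + 1) := by ring_nf

lemma lower_all (n : ℕ) (h1 : 1 ≤ n) (hn : n ≤ (3 * g - 1) / 2) : a 1 ≤ a n := by
  obtain ⟨j, r, hr, rfl⟩ : ∃ j r, r < 3 ∧ n = 3 * j + r := ⟨n / 3, n % 3, by omega, by omega⟩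
  interval_cases r
  · -- n = 3*j with j ≥ 1
    obtain ⟨j', rfl⟩ : ∃ j', j = j' + 1 := ⟨j - 1, by omega⟩
    calc a 1 ≤ a (3 * j' + 1) := lower1 hrec j' (by omega)
    _ ≤ a (3 * j' + 2) := step_up1 hrec j' (by omega)
    _ ≤ a (3 * j' + 3) := step_up2 hrec j' (by omega)
    _ = a (3 * (j' + 1) + 0) := by ring_nf
  · exact lower1 hrec j (by omega)
  · exact le_trans (lower1 hrec j (by omega)) (step_up1 hrec j (by omega))

lemma a1_val (hg : 1 ≤ g) (ha0 : a 0 = 1) : a 1 = 1 - 2 / (6 * (g:ℚ) - 1) := by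
  have h := d0 hrec 0 (by omega)
  simp only [Nat.mul_zero, Nat.add_zero, Nat.sub_zero] at h
  have hCc : Cc g 0 = 1 / ((6 * g - 1)‼ : ℚ) := by
    unfold Cc
    have h5 : ((g - 1)! : ℚ) ≠ 0 := by positivity
    have h6 : ((6 * g - 1)‼ : ℚ) ≠ 0 := by positivity
    norm_num [Nat.doubleFactorial]
    field_simp
  have hdf : ((6 * g - 1)‼ : ℚ) = (6 * (g:ℚ) - 1) * ((6 * g - 3)‼ : ℚ) := by
    conv_lhs => rw [show 6 * g - 1 = (6 * g - 3) + 2 by omega, Nat.doubleFactorial_add_two]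
    push_cast
    rw [show 6 * g - 3 = 6 * g - 3 from rfl,
      castsub (6 * g) 3 (by omega)]
    push_cast; ring
  rw [hCc, hdf] at h
  have h1 : (0:ℚ) < 6 * (g:ℚ) - 1 := by
    have : (1:ℚ) ≤ (g:ℚ) := by exact_mod_cast hg
    linarith
  have h2 : ((6 * g - 3)‼ : ℚ) ≠ 0 := by positivity
  rw [ha0] at h
  have h3 : (a 1 - 1) * (6 * (g:ℚ) - 1) * ((6 * g - 3)‼ : ℚ) =
      (-2) * ((6 * g - 3)‼ : ℚ) := by
    field_simp at h
    linear_combination ((6 * g - 3)‼ : ℚ) * h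
  have h4 : (a 1 - 1) * (6 * (g:ℚ) - 1) = -2 := mul_right_cancel₀ h2 h3
  have h5 : (6 * (g:ℚ) - 1) ≠ 0 := ne_of_gt h1
  field_simp
  linear_combination h4

end dvals

/-- Main bound on the correlator sequence. -/
lemma corr_bounds {g : ℕ} (hg : 1 ≤ g) {a : ℕ → ℚ} (h : IsCorr g a)
    (k : ℕ) (hk : k ≤ 3 * g - 1) :
    1 - 2 / (6 * (g:ℚ) - 1) ≤ a k ∧ a k ≤ 1 := by
  obtain ⟨ha0, hrec, hsym⟩ := h
  have h1 : (0:ℚ) < 6 * (g:ℚ) - 1 := by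
    have : (1:ℚ) ≤ (g:ℚ) := by exact_mod_cast hg
    linarith
  have hL1 : 1 - 2 / (6 * (g:ℚ) - 1) ≤ 1 := by
    have : 0 < 2 / (6 * (g:ℚ) - 1) := by positivity
    linarith
  have key : ∀ n : ℕ, n ≤ (3 * g - 1) / 2 → 1 - 2 / (6 * (g:ℚ) - 1) ≤ a n ∧ a n ≤ 1 := by
    intro n hn
    refine ⟨?_, upper_all hrec ha0 n hn⟩
    rcases Nat.eq_zero_or_pos n with rfl | hpos
    · rw [ha0]; exact hL1
    · have := lower_all hrec n hpos hn
      rw [a1_val hrec hg ha0] at this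
      linarith
  by_cases hm : k ≤ (3 * g - 1) / 2
  · exact key k hm
  · rw [hsym k hk]
    exact key (3 * g - 1 - k) (by omega)


lemma sum_parity_split (f : ℕ → ℤ) (N : ℕ) :
    ∑ i ∈ Finset.range (2 * N + 1), f i =
      (∑ k ∈ Finset.range (N + 1), f (2 * k)) + ∑ k ∈ Finset.range N, f (2 * k + 1) := by
  induction N with
  | zero => simp
  | succ N ih =>
    rw [show 2 * (N + 1) + 1 = (2 * N + 1) + 1 + 1 by ring, Finset.sum_range_succ,
      Finset.sum_range_succ, ih]
    simp only [Finset.sum_range_succ, show 2 * (N + 1) = 2 * N + 1 + 1 by ring]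
    ring

lemma odd_choose_sum (N : ℕ) (hN : 1 ≤ N) :
    2 * ∑ k ∈ Finset.range N, (((2 * N).choose (2 * k + 1) : ℤ)) = 2 ^ (2 * N) := by
  have htot : ∑ i ∈ Finset.range (2 * N + 1), ((2 * N).choose i : ℤ) = 2 ^ (2 * N) := by
    exact_mod_cast congrArg (Nat.cast : ℕ → ℤ) (Nat.sum_range_choose (2 * N))
  have halt : ∑ i ∈ Finset.range (2 * N + 1), ((-1 : ℤ)) ^ i * ((2 * N).choose i) = 0 :=
    Int.alternating_sum_range_choose_of_ne (by omega)
  have h1 := sum_parity_split (fun i => ((2 * N).choose i : ℤ)) N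
  have h2 := sum_parity_split (fun i => ((-1 : ℤ)) ^ i * ((2 * N).choose i)) N
  have he : ∀ k : ℕ, ((-1 : ℤ)) ^ (2 * k) * ((2 * N).choose (2 * k)) =
      (((2 * N).choose (2 * k)) : ℤ) := by intro k; simp [pow_mul]
  have ho : ∀ k : ℕ, ((-1 : ℤ)) ^ (2 * k + 1) * ((2 * N).choose (2 * k + 1)) =
      -(((2 * N).choose (2 * k + 1)) : ℤ) := by intro k; simp [pow_mul, pow_succ]
  simp only [he, ho, Finset.sum_neg_distrib] at h2
  rw [h1] at htot
  rw [h2] at halt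
  linarith


lemma zetaR_nonneg (s : ℕ) : 0 ≤ zetaR s := by
  apply tsum_nonneg
  intro n
  positivity


/-- two-sided bounds for `V1(g+1)`. -/
theorem stmt7 (a : ℕ → ℕ → ℚ) (ha : ∀ g : ℕ, 1 ≤ g → IsCorr g (a g))
    (g : ℕ) (hg : 1 ≤ g) :
    zetaR (6 * g) * ((4 * g).choose g : ℝ) * (16 / 3) ^ g * (1 - 2 / (6 * (g : ℝ) - 1))
        ≤ V1 a (g + 1) ∧
      V1 a (g + 1) ≤ zetaR (6 * g) * ((4 * g).choose g : ℝ) * (16 / 3) ^ g := by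
  have hcorr := ha g hg
  -- rewrite V1
  have hV : V1 a (g + 1) = zetaR (6 * g) * ((4 * g).choose g : ℝ) * (2 / (3 ^ g * 2 ^ (2 * g))) *
      ∑ k ∈ Finset.range (3 * g), ((6 * g).choose (2 * k + 1) : ℝ) * ((a g k : ℚ) : ℝ) := by
    unfold V1
    rw [show 6 * (g + 1) - 6 = 6 * g by omega, show 4 * (g + 1) - 4 = 4 * g by omega,
      show g + 1 - 1 = g by omega, show 3 * (g + 1) - 3 = 3 * g by omega,
      show 2 * (g + 1) - 2 = 2 * g by omega]
  -- value of odd binomial sum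
  have hsumC : ∑ k ∈ Finset.range (3 * g), ((6 * g).choose (2 * k + 1) : ℝ) =
      2 ^ (6 * g - 1) := by
    have h := odd_choose_sum (3 * g) (by omega)
    rw [show 2 * (3 * g) = 6 * g by ring] at h
    have h' : (2:ℝ) * ∑ k ∈ Finset.range (3 * g), ((6 * g).choose (2 * k + 1) : ℝ) =
        2 ^ (6 * g) := by exact_mod_cast congrArg (Int.cast : ℤ → ℝ) h
    have h2 : (2:ℝ) ^ (6 * g) = 2 * 2 ^ (6 * g - 1) := by
      conv_lhs => rw [show 6 * g = 1 + (6 * g - 1) by omega]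
      rw [pow_add, pow_one]
    linarith
  -- the prefactor is nonnegative
  have hgR : (1:ℝ) ≤ (g:ℝ) := by exact_mod_cast hg
  have hP : (0:ℝ) ≤ zetaR (6 * g) * ((4 * g).choose g : ℝ) * (2 / (3 ^ g * 2 ^ (2 * g))) := by
    have := zetaR_nonneg (6 * g)
    positivity
  -- bounds on the individual a's
  have hbd : ∀ k ∈ Finset.range (3 * g),
      1 - 2 / (6 * (g:ℚ) - 1) ≤ a g k ∧ a g k ≤ 1 := by
    intro k hk
    exact corr_bounds hg hcorr k (by simp at hk; omega)
  -- sum bounds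
  have hub : ∑ k ∈ Finset.range (3 * g), ((6 * g).choose (2 * k + 1) : ℝ) * ((a g k : ℚ) : ℝ)
      ≤ 2 ^ (6 * g - 1) := by
    rw [← hsumC]
    apply Finset.sum_le_sum
    intro k hk
    have h1 := (hbd k hk).2
    have h1' : ((a g k : ℚ) : ℝ) ≤ 1 := by exact_mod_cast h1
    nlinarith [Nat.cast_nonneg (α := ℝ) ((6 * g).choose (2 * k + 1))]
  have hLq : ((1 - 2 / (6 * (g:ℚ) - 1) : ℚ) : ℝ) = 1 - 2 / (6 * (g:ℝ) - 1) := by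
    push_cast
    ring
  have hlb : (1 - 2 / (6 * (g:ℝ) - 1)) * 2 ^ (6 * g - 1)
      ≤ ∑ k ∈ Finset.range (3 * g), ((6 * g).choose (2 * k + 1) : ℝ) * ((a g k : ℚ) : ℝ) := by
    rw [← hsumC, Finset.mul_sum]
    apply Finset.sum_le_sum
    intro k hk
    have h1 := (hbd k hk).1
    have h1' : 1 - 2 / (6 * (g:ℝ) - 1) ≤ ((a g k : ℚ) : ℝ) := by
      rw [← hLq]
      exact_mod_cast h1
    nlinarith [Nat.cast_nonneg (α := ℝ) ((6 * g).choose (2 * k + 1))]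
  -- prefactor times 2^(6g-1) equals the target
  have hkey : (2 / ((3:ℝ) ^ g * 2 ^ (2 * g))) * 2 ^ (6 * g - 1) = (16 / 3) ^ g := by
    have h2 : (2:ℝ) ^ (6 * g) = 2 * 2 ^ (6 * g - 1) := by
      conv_lhs => rw [show 6 * g = 1 + (6 * g - 1) by omega]
      rw [pow_add, pow_one]
    rw [div_pow, div_mul_eq_mul_div, div_eq_div_iff (by positivity) (by positivity),
      show (16:ℝ) ^ g = 2 ^ (4 * g) by rw [show (16:ℝ) = 2 ^ 4 by norm_num, ← pow_mul]]
    rw [← h2, show 6 * g = 4 * g + 2 * g by ring, pow_add]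
    ring
  constructor
  · rw [hV]
    calc zetaR (6 * g) * ((4 * g).choose g : ℝ) * (16 / 3) ^ g * (1 - 2 / (6 * (g:ℝ) - 1))
        = zetaR (6 * g) * ((4 * g).choose g : ℝ) * (2 / (3 ^ g * 2 ^ (2 * g))) *
          ((1 - 2 / (6 * (g:ℝ) - 1)) * 2 ^ (6 * g - 1)) := by
          rw [← hkey]; ring
    _ ≤ zetaR (6 * g) * ((4 * g).choose g : ℝ) * (2 / (3 ^ g * 2 ^ (2 * g))) *
          ∑ k ∈ Finset.range (3 * g), ((6 * g).choose (2 * k + 1) : ℝ) * ((a g k : ℚ) : ℝ) :=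
        mul_le_mul_of_nonneg_left hlb hP
  · rw [hV]
    calc zetaR (6 * g) * ((4 * g).choose g : ℝ) * (2 / (3 ^ g * 2 ^ (2 * g))) *
          ∑ k ∈ Finset.range (3 * g), ((6 * g).choose (2 * k + 1) : ℝ) * ((a g k : ℚ) : ℝ)
        ≤ zetaR (6 * g) * ((4 * g).choose g : ℝ) * (2 / (3 ^ g * 2 ^ (2 * g))) *
          (2 ^ (6 * g - 1)) := mul_le_mul_of_nonneg_left hub hP
    _ = zetaR (6 * g) * ((4 * g).choose g : ℝ) * (16 / 3) ^ g := by
          rw [← hkey]; ring
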